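/- Under construction (H2), with S1 = V0·V1 and S2 = V0 where V0 ~ Beta(1,α1), V1 ~ Beta(1+α1,α2) independent, the correlation of S1 and S2 equals sqrt(α1(2+α1+α2) / ((α1+α2)(2+α1))). -/

import Mathlib

open MeasureTheory ProbabilityTheory Real Filter

/-- The density of a Beta(a,b) random variable on (0,1). -/
noncomputable def betaPDFReal (a b x : ℝ) : ℝ :=
  if 0 < x ∧ x < 1 then
    (Real.Gamma (a + b) / (Real.Gamma a * Real.Gamma b)) * x ^ (a - 1) * (1 - x) ^ (b - 1)
  else 0

/-- The Beta(a,b) probability measure on ℝ. -/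
noncomputable def betaMeasure (a b : ℝ) : Measure ℝ :=
  MeasureTheory.volume.withDensity (fun x => ENNReal.ofReal (_root_.betaPDFReal a b x))

/-- `X` is a beta random variable with parameters `(a, b)` on `(Ω, μ)`. -/
def HasBetaLaw {Ω : Type*} [MeasurableSpace Ω] (μ : Measure Ω) (X : Ω → ℝ) (a b : ℝ) : Prop :=
  Measurable X ∧ μ.map X = _root_.betaMeasure a b
open scoped ENNReal NNReal

lemma betaPDFReal_nonneg {a b : ℝ} (ha : 0 < a) (hb : 0 < b) (x : ℝ) :
    0 ≤ _root_.betaPDFReal a b x := by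
  unfold _root_.betaPDFReal
  split_ifs with h
  · obtain ⟨hx0, hx1⟩ := h
    have h1 := Real.Gamma_pos_of_pos ha
    have h2 := Real.Gamma_pos_of_pos hb
    have h3 := Real.Gamma_pos_of_pos (show (0:ℝ) < a + b by linarith)
    have := Real.rpow_nonneg hx0.le (a-1)
    have := Real.rpow_nonneg (show (0:ℝ) ≤ 1 - x by linarith) (b-1)
    positivity
  · exact le_refl _

lemma betaPDFReal_measurable (a b : ℝ) : Measurable (_root_.betaPDFReal a b) := by
  unfold _root_.betaPDFReal
  apply Measurable.ite
  · exact (measurableSet_Ioi (a := (0:ℝ))).inter measurableSet_Iio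
  · fun_prop
  · exact measurable_const

lemma realBetaIntegral {a b : ℝ} (ha : 0 < a) (hb : 0 < b) :
    ∫ x in Set.Ioo (0:ℝ) 1, x ^ (a-1) * (1-x) ^ (b-1) =
      Real.Gamma a * Real.Gamma b / Real.Gamma (a+b) := by
  have key := Complex.Gamma_mul_Gamma_eq_betaIntegral (s := a) (t := b)
    (by simpa using ha) (by simpa using hb)
  have hbeta : Complex.betaIntegral a b
      = ((∫ x in (0:ℝ)..1, x ^ (a-1) * (1-x) ^ (b-1) : ℝ) : ℂ) := by
    rw [Complex.betaIntegral, ← intervalIntegral.integral_ofReal]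
    apply intervalIntegral.integral_congr
    intro x hx
    rw [Set.uIcc_of_le (by norm_num)] at hx
    push_cast
    rw [show ((1:ℂ) - (x:ℂ)) = ((1-x:ℝ):ℂ) by push_cast; ring,
      show ((a:ℂ)-1) = ((a-1:ℝ):ℂ) by push_cast; ring,
      show ((b:ℂ)-1) = ((b-1:ℝ):ℂ) by push_cast; ring,
      ← Complex.ofReal_cpow hx.1, ← Complex.ofReal_cpow (by linarith [hx.2])]
  rw [hbeta, ← Complex.ofReal_add, Complex.Gamma_ofReal, Complex.Gamma_ofReal, Complex.Gamma_ofReal] at key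
  have key2 : Real.Gamma a * Real.Gamma b
      = Real.Gamma (a+b) * ∫ x in (0:ℝ)..1, x ^ (a-1) * (1-x) ^ (b-1) := by
    exact_mod_cast key
  have hG : Real.Gamma (a+b) ≠ 0 := (Real.Gamma_pos_of_pos (by linarith)).ne'
  rw [intervalIntegral.integral_of_le (by norm_num), integral_Ioc_eq_integral_Ioo] at key2
  field_simp [key2]
  rw [key2]; ring


lemma betaMeasure_integral_pow {a b : ℝ} (ha : 0 < a) (hb : 0 < b) (n : ℕ) :
    ∫ x, x ^ n ∂_root_.betaMeasure a b =
      Real.Gamma (a + n) * Real.Gamma (a + b) / (Real.Gamma a * Real.Gamma (a + b + n)) := by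
  have hm : Measurable fun x => (_root_.betaPDFReal a b x).toNNReal :=
    (betaPDFReal_measurable a b).real_toNNReal
  have h0 : (fun x => ENNReal.ofReal (_root_.betaPDFReal a b x))
      = fun x => ((_root_.betaPDFReal a b x).toNNReal : ℝ≥0∞) := rfl
  rw [_root_.betaMeasure, h0, integral_withDensity_eq_integral_smul hm]
  have h1 : (fun x => ((_root_.betaPDFReal a b x).toNNReal : ℝ≥0) • (x ^ n : ℝ))
      = Set.indicator (Set.Ioo (0:ℝ) 1)
        (fun x => (Real.Gamma (a+b) / (Real.Gamma a * Real.Gamma b))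
            * x ^ (a-1) * (1-x) ^ (b-1) * x ^ n) := by
    funext x
    rw [NNReal.smul_def, Real.coe_toNNReal _ (betaPDFReal_nonneg ha hb x)]
    unfold _root_.betaPDFReal
    by_cases h : x ∈ Set.Ioo (0:ℝ) 1
    · rw [Set.indicator_of_mem h, if_pos (Set.mem_Ioo.mp h), smul_eq_mul]
    · rw [Set.indicator_of_notMem h, if_neg (fun hc => h (Set.mem_Ioo.mpr hc))]
      simp
  rw [h1, integral_indicator measurableSet_Ioo]
  have h2 : ∀ x ∈ Set.Ioo (0:ℝ) 1,
      (Real.Gamma (a+b) / (Real.Gamma a * Real.Gamma b))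
          * x ^ (a-1) * (1-x) ^ (b-1) * x ^ n
        = (Real.Gamma (a+b) / (Real.Gamma a * Real.Gamma b))
          * (x ^ ((a + n) - 1) * (1-x) ^ (b-1)) := by
    intro x hx
    rw [← Real.rpow_natCast x n]
    rw [show (a + (n:ℝ)) - 1 = (a - 1) + (n:ℝ) by ring, Real.rpow_add hx.1]
    ring
  rw [setIntegral_congr_fun measurableSet_Ioo h2, integral_const_mul,
    realBetaIntegral (by positivity) hb]
  have hGa := Real.Gamma_pos_of_pos ha
  have hGb := Real.Gamma_pos_of_pos hb
  have hGabn := Real.Gamma_pos_of_pos (show (0:ℝ) < a + b + n by positivity)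
  rw [show a + (n:ℝ) + b = a + b + n by ring]
  field_simp

lemma betaMeasure_integral_id {a b : ℝ} (ha : 0 < a) (hb : 0 < b) :
    ∫ x, x ∂_root_.betaMeasure a b = a / (a + b) := by
  have h := betaMeasure_integral_pow ha hb 1
  simp only [pow_one, Nat.cast_one] at h
  rw [h, Real.Gamma_add_one ha.ne', Real.Gamma_add_one (show a + b ≠ 0 by positivity)]
  have hGa := Real.Gamma_pos_of_pos ha
  have hGab := Real.Gamma_pos_of_pos (show (0:ℝ) < a + b by positivity)
  field_simp

lemma betaMeasure_integral_sq {a b : ℝ} (ha : 0 < a) (hb : 0 < b) :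
    ∫ x, x ^ 2 ∂_root_.betaMeasure a b = a * (a + 1) / ((a + b) * (a + b + 1)) := by
  have h := betaMeasure_integral_pow ha hb 2
  simp only [Nat.cast_ofNat] at h
  rw [h, show a + (2:ℝ) = (a + 1) + 1 by ring, show a + b + (2:ℝ) = ((a + b) + 1) + 1 by ring,
    Real.Gamma_add_one (show a + 1 ≠ 0 by positivity),
    Real.Gamma_add_one (show a + b + 1 ≠ 0 by positivity),
    Real.Gamma_add_one ha.ne', Real.Gamma_add_one (show a + b ≠ 0 by positivity)]
  have hGa := Real.Gamma_pos_of_pos ha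
  have hGab := Real.Gamma_pos_of_pos (show (0:ℝ) < a + b by positivity)
  have h1 : a + 1 > 0 := by linarith
  have h2 : a + b + 1 > 0 := by linarith
  field_simp

namespace HasBetaLaw

variable {Ω : Type*} [MeasurableSpace Ω] {μ : Measure Ω} {X : Ω → ℝ} {a b : ℝ}

lemma integral_pow (h : HasBetaLaw μ X a b) (n : ℕ) :
    ∫ ω, (X ω) ^ n ∂μ = ∫ x, x ^ n ∂_root_.betaMeasure a b := by
  rw [← h.2]
  exact (integral_map (f := fun x => x ^ n) h.1.aemeasurable
    ((by fun_prop : Measurable fun x : ℝ => x ^ n).aestronglyMeasurable)).symm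

lemma ae_mem (h : HasBetaLaw μ X a b) : ∀ᵐ ω ∂μ, X ω ∈ Set.Ioo (0:ℝ) 1 := by
  have hs : MeasurableSet (Set.Ioo (0:ℝ) 1)ᶜ := measurableSet_Ioo.compl
  have hz : _root_.betaMeasure a b (Set.Ioo (0:ℝ) 1)ᶜ = 0 := by
    rw [_root_.betaMeasure, withDensity_apply _ hs]
    rw [setLIntegral_congr_fun hs (fun x hx => ?_), lintegral_zero]
    have : ¬ (0 < x ∧ x < 1) := fun hc => hx (Set.mem_Ioo.mpr hc)
    simp [_root_.betaPDFReal, this]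
  have : μ (X ⁻¹' (Set.Ioo (0:ℝ) 1)ᶜ) = 0 := by
    rw [← Measure.map_apply h.1 hs, h.2]; exact hz
  have := measure_eq_zero_iff_ae_notMem.mp this
  filter_upwards [this] with ω hω
  simpa using hω

lemma ae_bound (h : HasBetaLaw μ X a b) (n : ℕ) : ∀ᵐ ω ∂μ, ‖(X ω) ^ n‖ ≤ 1 := by
  filter_upwards [h.ae_mem] with ω hω
  rw [Real.norm_eq_abs, abs_pow, abs_of_pos hω.1]
  exact pow_le_one₀ hω.1.le hω.2.le

lemma integrable_pow [IsProbabilityMeasure μ] (h : HasBetaLaw μ X a b) (n : ℕ) :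
    Integrable (fun ω => (X ω) ^ n) μ :=
  Integrable.mono' (integrable_const 1)
    ((h.1.pow_const n).aestronglyMeasurable) (h.ae_bound n)

lemma integrable [IsProbabilityMeasure μ] (h : HasBetaLaw μ X a b) : Integrable X μ := by
  have := h.integrable_pow 1
  simpa using this

end HasBetaLaw


theorem correlation_H2 {Ω : Type*} [MeasurableSpace Ω] (μ : Measure Ω)
    [IsProbabilityMeasure μ] (V0 V1 : Ω → ℝ) (α1 α2 : ℝ) (hα1 : 0 < α1) (hα2 : 0 < α2)
    (h0 : HasBetaLaw μ V0 1 α1) (h1 : HasBetaLaw μ V1 (1 + α1) α2)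
    (hind : IndepFun V0 V1 μ)
    (S1 S2 : Ω → ℝ) (hS1 : S1 = fun ω => V0 ω * V1 ω) (hS2 : S2 = V0) :
    ((∫ ω, S1 ω * S2 ω ∂μ) - (∫ ω, S1 ω ∂μ) * (∫ ω, S2 ω ∂μ)) /
        (Real.sqrt ((∫ ω, S1 ω ^ 2 ∂μ) - (∫ ω, S1 ω ∂μ) ^ 2) *
          Real.sqrt ((∫ ω, S2 ω ^ 2 ∂μ) - (∫ ω, S2 ω ∂μ) ^ 2)) =
      Real.sqrt (α1 * (2 + α1 + α2) / ((α1 + α2) * (2 + α1))) := by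
  have p1 : (0:ℝ) < 1 + α1 := by linarith
  have p2 : (0:ℝ) < 2 + α1 := by linarith
  have p3 : (0:ℝ) < 1 + α1 + α2 := by linarith
  have p4 : (0:ℝ) < 2 + α1 + α2 := by linarith
  -- moments of V0
  have e1 : ∫ ω, V0 ω ∂μ = 1 / (1 + α1) := by
    have h := h0.integral_pow 1
    simp only [pow_one] at h
    rw [h, betaMeasure_integral_id one_pos hα1]
  have e2 : ∫ ω, V0 ω ^ 2 ∂μ = 2 / ((1 + α1) * (2 + α1)) := by
    rw [h0.integral_pow 2, betaMeasure_integral_sq one_pos hα1]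
    rw [show (1:ℝ) + α1 + 1 = 2 + α1 by ring]
    norm_num
  have e3 : ∫ ω, V1 ω ∂μ = (1 + α1) / (1 + α1 + α2) := by
    have h := h1.integral_pow 1
    simp only [pow_one] at h
    rw [h, betaMeasure_integral_id p1 hα2]
  have e4 : ∫ ω, V1 ω ^ 2 ∂μ = (1 + α1) * (2 + α1) / ((1 + α1 + α2) * (2 + α1 + α2)) := by
    rw [h1.integral_pow 2, betaMeasure_integral_sq p1 hα2]
    rw [show (1:ℝ) + α1 + 1 = 2 + α1 by ring, show (1:ℝ) + α1 + α2 + 1 = 2 + α1 + α2 by ring]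
  -- integrability
  have i0 : Integrable V0 μ := h0.integrable
  have i1 : Integrable V1 μ := h1.integrable
  have i02 : Integrable (fun ω => V0 ω ^ 2) μ := h0.integrable_pow 2
  have i12 : Integrable (fun ω => V1 ω ^ 2) μ := h1.integrable_pow 2
  -- independence products
  have ind2 : IndepFun (fun ω => V0 ω ^ 2) V1 μ :=
    hind.comp (measurable_id.pow_const 2) measurable_id
  have ind3 : IndepFun (fun ω => V0 ω ^ 2) (fun ω => V1 ω ^ 2) μ :=
    hind.comp (measurable_id.pow_const 2) (measurable_id.pow_const 2)
  have ES1 : ∫ ω, S1 ω ∂μ = 1 / (1 + α1 + α2) := by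
    rw [hS1, show (fun ω => V0 ω * V1 ω) = V0 * V1 from rfl,
      hind.integral_mul_eq_mul_integral i0.aestronglyMeasurable i1.aestronglyMeasurable, e1, e3]
    field_simp
  have ES2 : ∫ ω, S2 ω ∂μ = 1 / (1 + α1) := by rw [hS2, e1]
  have ES1S2 : ∫ ω, S1 ω * S2 ω ∂μ = 2 / ((2 + α1) * (1 + α1 + α2)) := by
    rw [hS1, hS2]
    have hfe : (fun ω => V0 ω * V1 ω * V0 ω) = fun ω => V0 ω ^ 2 * V1 ω := by
      funext ω; ring
    calc ∫ ω, V0 ω * V1 ω * V0 ω ∂μ = ∫ ω, V0 ω ^ 2 * V1 ω ∂μ := by rw [hfe]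
      _ = (∫ ω, V0 ω ^ 2 ∂μ) * ∫ ω, V1 ω ∂μ := by
          rw [show (fun ω => V0 ω ^ 2 * V1 ω) = (fun ω => V0 ω ^ 2) * V1 from rfl]
          exact ind2.integral_mul_eq_mul_integral i02.aestronglyMeasurable i1.aestronglyMeasurable
      _ = 2 / ((2 + α1) * (1 + α1 + α2)) := by
          rw [e2, e3]; field_simp
  have ES1sq : ∫ ω, S1 ω ^ 2 ∂μ = 2 / ((1 + α1 + α2) * (2 + α1 + α2)) := by
    rw [hS1]
    have hfe : (fun ω => (V0 ω * V1 ω) ^ 2) = fun ω => V0 ω ^ 2 * V1 ω ^ 2 := by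
      funext ω; ring
    calc ∫ ω, (V0 ω * V1 ω) ^ 2 ∂μ = ∫ ω, V0 ω ^ 2 * V1 ω ^ 2 ∂μ := by rw [hfe]
      _ = (∫ ω, V0 ω ^ 2 ∂μ) * ∫ ω, V1 ω ^ 2 ∂μ := by
          rw [show (fun ω => V0 ω ^ 2 * V1 ω ^ 2)
            = (fun ω => V0 ω ^ 2) * (fun ω => V1 ω ^ 2) from rfl]
          exact ind3.integral_mul_eq_mul_integral i02.aestronglyMeasurable i12.aestronglyMeasurable
      _ = 2 / ((1 + α1 + α2) * (2 + α1 + α2)) := by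
          rw [e2, e4]; field_simp
  have ES2sq : ∫ ω, S2 ω ^ 2 ∂μ = 2 / ((1 + α1) * (2 + α1)) := by rw [hS2, e2]
  rw [ES1, ES2, ES1S2, ES1sq, ES2sq]
  have hcov : 2 / ((2 + α1) * (1 + α1 + α2)) - 1 / (1 + α1 + α2) * (1 / (1 + α1))
      = α1 / ((1 + α1) * (2 + α1) * (1 + α1 + α2)) := by
    field_simp; ring
  have hv1 : 2 / ((1 + α1 + α2) * (2 + α1 + α2)) - (1 / (1 + α1 + α2)) ^ 2
      = (α1 + α2) / ((1 + α1 + α2) ^ 2 * (2 + α1 + α2)) := by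
    field_simp; ring
  have hv2 : 2 / ((1 + α1) * (2 + α1)) - (1 / (1 + α1)) ^ 2
      = α1 / ((1 + α1) ^ 2 * (2 + α1)) := by
    field_simp; ring
  rw [hcov, hv1, hv2]
  set c := α1 / ((1 + α1) * (2 + α1) * (1 + α1 + α2)) with hc
  set v1 := (α1 + α2) / ((1 + α1 + α2) ^ 2 * (2 + α1 + α2)) with hv1'
  set v2 := α1 / ((1 + α1) ^ 2 * (2 + α1)) with hv2'
  have hcpos : 0 < c := by rw [hc]; positivity
  have hv1pos : 0 < v1 := by rw [hv1']; positivity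
  have hv2pos : 0 < v2 := by rw [hv2']; positivity
  rw [← Real.sqrt_mul hv1pos.le, show c = Real.sqrt (c ^ 2) by
      rw [Real.sqrt_sq hcpos.le], ← Real.sqrt_div (by positivity)]
  congr 1
  rw [hc, hv1', hv2']
  have h5 : α1 + α2 > 0 := by linarith
  field_simp
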